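/- For the Gaussian-type scaled kernel, there exists a constant C independent of δ such that for all y, z ∈ ℝⁿ, ∫_Ω R_δ(x,y) R_δ(x,z) dx ≤ C R_{2√2 δ}(y,z), i.e., the product of two shifted kernels integrated in x is dominated by a kernel of horizon scaled by 2√2. -/

import Mathlib

open MeasureTheory Set

/-- The scaled kernel `R_δ(x,y) = α δ^{-n} R(|x-y|²/(4δ²))`. -/
noncomputable def scaledKernel (n : ℕ) (α δ : ℝ) (R : ℝ → ℝ)
    (x y : EuclideanSpace ℝ (Fin n)) : ℝ :=
  α / δ ^ n * R (‖x - y‖ ^ 2 / (4 * δ ^ 2))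

/-- `∫_Ω R_δ(x,y) R_δ(x,z) dx ≤ C R_{2√2 δ}(y,z)`. -/
theorem stmt8 (n : ℕ) (Ω : Set (EuclideanSpace ℝ (Fin n)))
    (hΩm : MeasurableSet Ω)
    (R : ℝ → ℝ) (α M γ₀ : ℝ) (hα : 0 < α)
    (hR : ∀ r, 0 ≤ R r) (hM : ∀ r, R r ≤ M)
    (hmono : AntitoneOn R (Ici 0))
    (hsupp : ∀ r, 1 < r → R r = 0)
    (hγ : 0 < γ₀) (hnd : ∀ r ∈ Icc (0:ℝ) (1/2), γ₀ ≤ R r) :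
    ∃ C : ℝ, 0 < C ∧ ∀ δ : ℝ, 0 < δ →
      ∀ y z : EuclideanSpace ℝ (Fin n),
        (∫ x in Ω, scaledKernel n α δ R x y * scaledKernel n α δ R x z)
          ≤ C * scaledKernel n α (2 * Real.sqrt 2 * δ) R y z := by
  have hs2 : (0:ℝ) < Real.sqrt 2 := Real.sqrt_pos.2 (by norm_num)
  have hs2sq : (Real.sqrt 2) ^ 2 = 2 := Real.sq_sqrt (by norm_num)
  set V : ℝ := (volume (Metric.ball (0 : EuclideanSpace ℝ (Fin n)) 1)).toReal with hVdef
  have hV0 : 0 ≤ V := ENNReal.toReal_nonneg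
  have hM0 : 0 < M := lt_of_lt_of_le hγ ((hnd 0 (by norm_num)).trans (hM 0))
  refine ⟨α * M ^ 2 * (4 * Real.sqrt 2) ^ n * V / γ₀ + 1, by positivity, ?_⟩
  intro δ hδ y z
  set C₀ : ℝ := α * M ^ 2 * (4 * Real.sqrt 2) ^ n * V / γ₀ with hC₀def
  have hC₀0 : 0 ≤ C₀ := by positivity
  have hker_zero : ∀ (w x : EuclideanSpace ℝ (Fin n)), 2 * δ < ‖x - w‖ →
      scaledKernel n α δ R x w = 0 := by
    intro w x hx
    have h1 : 1 < ‖x - w‖ ^ 2 / (4 * δ ^ 2) := by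
      rw [lt_div_iff₀ (by positivity)]
      nlinarith [norm_nonneg (x - w)]
    simp [scaledKernel, hsupp _ h1]
  have hker_nonneg : ∀ (α' δ' : ℝ) (x w : EuclideanSpace ℝ (Fin n)), 0 < α' → 0 < δ' →
      0 ≤ scaledKernel n α' δ' R x w := by
    intro α' δ' x w hα' hδ'
    exact mul_nonneg (by positivity) (hR _)
  have hδ' : (0:ℝ) < 2 * Real.sqrt 2 * δ := by positivity
  rcases le_or_gt ‖y - z‖ (4 * δ) with hnear | hfar
  · -- near case
    -- RHS kernel lower bound
    have harg : ‖y - z‖ ^ 2 / (4 * (2 * Real.sqrt 2 * δ) ^ 2) ∈ Icc (0:ℝ) (1/2) := by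
      constructor
      · positivity
      · rw [div_le_iff₀ (by positivity)]
        have h8 : (2 * Real.sqrt 2 * δ) ^ 2 = 8 * δ ^ 2 := by
          rw [mul_pow, mul_pow]; rw [hs2sq]; ring
        rw [h8]
        nlinarith [norm_nonneg (y - z)]
    have hRarg : γ₀ ≤ R (‖y - z‖ ^ 2 / (4 * (2 * Real.sqrt 2 * δ) ^ 2)) := hnd _ harg
    set K : ℝ := (α / δ ^ n * M) ^ 2 with hKdef
    have hK0 : 0 ≤ K := by positivity
    set g : EuclideanSpace ℝ (Fin n) → ℝ :=
      (Metric.closedBall y (2 * δ)).indicator (fun _ => K) with hgdef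
    have hg0 : ∀ x, 0 ≤ g x := fun x => Set.indicator_nonneg (fun _ _ => hK0) x
    have hfg : ∀ x, scaledKernel n α δ R x y * scaledKernel n α δ R x z ≤ g x := by
      intro x
      by_cases hx : x ∈ Metric.closedBall y (2 * δ)
      · rw [hgdef, indicator_of_mem hx, hKdef, sq]
        have h1 : scaledKernel n α δ R x y ≤ α / δ ^ n * M :=
          mul_le_mul_of_nonneg_left (hM _) (by positivity)
        have h2 : scaledKernel n α δ R x z ≤ α / δ ^ n * M :=
          mul_le_mul_of_nonneg_left (hM _) (by positivity)
        exact mul_le_mul h1 h2 (hker_nonneg α δ x z hα hδ) (by positivity)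
      · rw [hgdef, indicator_of_notMem hx]
        have hx' : 2 * δ < ‖x - y‖ := by
          rw [Metric.mem_closedBall, dist_eq_norm] at hx
          linarith [not_le.1 hx]
        rw [hker_zero y x hx', zero_mul]
    have hgint : Integrable g volume := by
      apply IntegrableOn.integrable_indicator _ Metric.isClosed_closedBall.measurableSet
      exact integrableOn_const measure_closedBall_lt_top.ne
    have hvol : (volume (Metric.closedBall y (2 * δ))).toReal = (2 * δ) ^ n * V := by
      rw [Measure.addHaar_closedBall volume y (by positivity : (0:ℝ) ≤ 2 * δ)]
      rw [ENNReal.toReal_mul, ENNReal.toReal_ofReal (by positivity)]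
      congr 1
      simp [finrank_euclideanSpace_fin]
    have key : (2 * δ) ^ n * V * K = C₀ * (α / (2 * Real.sqrt 2 * δ) ^ n * γ₀) := by
      have h1 : ((4:ℝ) * Real.sqrt 2) ^ n = 2 ^ n * (2 * Real.sqrt 2) ^ n := by
        rw [← mul_pow]; ring_nf
      rw [hC₀def, hKdef, h1]
      have hδn : (δ:ℝ) ^ n ≠ 0 := by positivity
      have hδ'n : ((2:ℝ) * Real.sqrt 2 * δ) ^ n ≠ 0 := by positivity
      field_simp
      ring_nf
    calc (∫ x in Ω, scaledKernel n α δ R x y * scaledKernel n α δ R x z)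
        ≤ ∫ x in Ω, g x :=
          integral_mono_of_nonneg
            (ae_of_all _ fun x => mul_nonneg (hker_nonneg α δ x y hα hδ) (hker_nonneg α δ x z hα hδ))
            hgint.restrict (ae_of_all _ hfg)
      _ ≤ ∫ x, g x := setIntegral_le_integral hgint (ae_of_all _ hg0)
      _ = (volume (Metric.closedBall y (2 * δ))).toReal * K := by
          rw [hgdef, integral_indicator_const _ Metric.isClosed_closedBall.measurableSet, smul_eq_mul, measureReal_def]
      _ = (2 * δ) ^ n * V * K := by rw [hvol]
      _ = C₀ * (α / (2 * Real.sqrt 2 * δ) ^ n * γ₀) := key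
      _ ≤ (C₀ + 1) * (α / (2 * Real.sqrt 2 * δ) ^ n * γ₀) := by
          apply mul_le_mul_of_nonneg_right (by linarith) (by positivity)
      _ ≤ (C₀ + 1) * scaledKernel n α (2 * Real.sqrt 2 * δ) R y z := by
          apply mul_le_mul_of_nonneg_left _ (by linarith)
          exact mul_le_mul_of_nonneg_left hRarg (by positivity)
  · -- far case: integrand vanishes
    have hzero : ∀ x : EuclideanSpace ℝ (Fin n),
        scaledKernel n α δ R x y * scaledKernel n α δ R x z = 0 := by
      intro x
      rcases le_or_gt ‖x - y‖ (2 * δ) with hxy | hxy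
      · rcases le_or_gt ‖x - z‖ (2 * δ) with hxz | hxz
        · exfalso
          have := norm_sub_le_norm_sub_add_norm_sub y x z
          have hyx : ‖y - x‖ = ‖x - y‖ := norm_sub_rev y x
          linarith [this, hyx ▸ this]
        · rw [hker_zero z x hxz, mul_zero]
      · rw [hker_zero y x hxy, zero_mul]
    have hL : (∫ x in Ω, scaledKernel n α δ R x y * scaledKernel n α δ R x z) = 0 := by
      simp [hzero]
    rw [hL]
    exact mul_nonneg (by positivity) (hker_nonneg α (2 * Real.sqrt 2 * δ) y z hα hδ')
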